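/- arXiv:2210.16913 — 4 statements merged into one kernel-verified Lean document; each statement's English description precedes it below -/
import Mathlib

section
/- Define L_t for t ≥ 2 as the largest integer B such that t ≥ (B−1)·2^{B−1}. Then for all t ≥ 2, L_t > 0.63·log₂(1 + ln(2)·t). -/
lemma rpow_37_63 : (3/2 : ℝ) ≤ (2 : ℝ) ^ ((37/63 : ℝ)) := by
  have h63 : (0:ℕ) < 63 := by norm_num
  have h : ((3/2 : ℝ)) ^ (63:ℕ) ≤ ((2:ℝ) ^ ((37/63 : ℝ))) ^ (63:ℕ) := by
    rw [← Real.rpow_natCast ((2:ℝ) ^ ((37/63 : ℝ))) 63, ← Real.rpow_mul (by norm_num)]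
    norm_num
  exact le_of_pow_le_pow_left₀ (by norm_num) (by positivity) h

lemma aux_ineq : ∀ n : ℕ, 2 ≤ n → (1/4 : ℝ) + Real.log 2 * n ≤ (2:ℝ) ^ ((37/63 : ℝ) * n) := by
  intro n hn
  induction n with
  | zero => omega
  | succ m ih =>
    rcases Nat.lt_or_ge m 2 with hm | hm
    · interval_cases m
      · omega
      · -- n = 2
        have hlog : Real.log 2 < 0.6931471808 := Real.log_two_lt_d9
        have h2 : (2:ℝ) ≤ (2:ℝ) ^ ((37/63 : ℝ) * 2) := by
          nth_rewrite 1 [show (2:ℝ) = (2:ℝ) ^ ((1:ℝ)) by norm_num]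
          apply Real.rpow_le_rpow_left_iff (by norm_num : (1:ℝ) < 2) |>.mpr
          norm_num
        push_cast
        nlinarith
    · have ihm := ih hm
      have hR2 : (2:ℝ) ≤ (2:ℝ) ^ ((37/63 : ℝ) * m) := by
        nth_rewrite 1 [show (2:ℝ) = (2:ℝ) ^ ((1:ℝ)) by norm_num]
        apply Real.rpow_le_rpow_left_iff (by norm_num : (1:ℝ) < 2) |>.mpr
        have : (2:ℝ) ≤ m := by exact_mod_cast hm
        nlinarith
      have hstep : (2:ℝ) ^ ((37/63 : ℝ) * (m+1)) = (2:ℝ) ^ ((37/63:ℝ)) * (2:ℝ) ^ ((37/63 : ℝ) * m) := by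
        rw [← Real.rpow_add (by norm_num)]; ring_nf
      have hlog : Real.log 2 < 0.6931471808 := Real.log_two_lt_d9
      have h32 := rpow_37_63
      have hRpos : (0:ℝ) < (2:ℝ) ^ ((37/63 : ℝ) * m) := by positivity
      push_cast
      rw [show ((37:ℝ)/63 * (m+1)) = (37/63 : ℝ) * ((m:ℝ)+1) by ring]
      have : (2:ℝ) ^ ((37/63 : ℝ) * ((m:ℝ)+1)) = (2:ℝ) ^ ((37/63:ℝ)) * (2:ℝ) ^ ((37/63 : ℝ) * m) := by
        rw [← Real.rpow_add (by norm_num)]; ring_nf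
      rw [this]
      nlinarith

theorem num_brackets_lower_bound (t L : ℕ) (ht : 2 ≤ t)
    (hL : IsGreatest {B : ℕ | ((B : ℝ) - 1) * (2 : ℝ) ^ ((B : ℤ) - 1) ≤ t} L) :
    (L : ℝ) > 0.63 * Real.logb 2 (1 + Real.log 2 * t) := by
  -- L ≥ 2
  have h2S : (2:ℕ) ∈ {B : ℕ | ((B : ℝ) - 1) * (2 : ℝ) ^ ((B : ℤ) - 1) ≤ t} := by
    simp only [Set.mem_setOf_eq]
    push_cast
    norm_num
    exact_mod_cast ht
  have hL2 : 2 ≤ L := hL.2 h2S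
  -- t < L * 2^L
  have hnot : ¬ (((L+1 : ℕ) : ℝ) - 1) * (2 : ℝ) ^ (((L+1 : ℕ) : ℤ) - 1) ≤ t := by
    intro h
    have := hL.2 h
    omega
  have ht' : (t : ℝ) < (L : ℝ) * (2 : ℝ) ^ (L : ℕ) := by
    push_cast at hnot
    simp only [add_sub_cancel_right] at hnot
    rw [zpow_natCast] at hnot
    linarith [not_le.mp hnot]
  have hlog2 : (0:ℝ) < Real.log 2 := Real.log_pos (by norm_num)
  have hLR : (2:ℝ) ≤ (L:ℝ) := by exact_mod_cast hL2
  have hpowpos : (0:ℝ) < (2:ℝ) ^ (L:ℕ) := by positivity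
  -- 1 ≤ 2^L / 4
  have h14 : (1:ℝ) ≤ (1/4) * (2:ℝ) ^ (L:ℕ) := by
    have : (4:ℝ) ≤ (2:ℝ) ^ (L:ℕ) := by
      calc (4:ℝ) = 2^(2:ℕ) := by norm_num
      _ ≤ 2^(L:ℕ) := pow_le_pow_right₀ (by norm_num) hL2
    linarith
  have key := aux_ineq L hL2
  -- 1 + log 2 * t < 2 ^ ((100/63) * L)
  have hchain : 1 + Real.log 2 * t < (2:ℝ) ^ ((100/63 : ℝ) * L) := by
    have h1 : 1 + Real.log 2 * t < 1 + Real.log 2 * ((L:ℝ) * 2^(L:ℕ)) := by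
      nlinarith
    have h2 : 1 + Real.log 2 * ((L:ℝ) * 2^(L:ℕ)) ≤ (2:ℝ)^(L:ℕ) * ((1/4 : ℝ) + Real.log 2 * L) := by
      ring_nf
      nlinarith
    have h3 : (2:ℝ)^(L:ℕ) * ((1/4 : ℝ) + Real.log 2 * L) ≤ (2:ℝ)^(L:ℕ) * (2:ℝ) ^ ((37/63 : ℝ) * L) := by
      nlinarith
    have h4 : (2:ℝ)^(L:ℕ) * (2:ℝ) ^ ((37/63 : ℝ) * L) = (2:ℝ) ^ ((100/63 : ℝ) * L) := by
      rw [← Real.rpow_natCast 2 L, ← Real.rpow_add (by norm_num)]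
      ring_nf
    linarith [h4 ▸ h3]
  have hpos : (0:ℝ) < 1 + Real.log 2 * t := by positivity
  have hlb : Real.logb 2 (1 + Real.log 2 * t) < (100/63 : ℝ) * L := by
    calc Real.logb 2 (1 + Real.log 2 * t)
        < Real.logb 2 ((2:ℝ) ^ ((100/63 : ℝ) * L)) :=
          Real.logb_lt_logb (by norm_num) hpos hchain
      _ = (100/63 : ℝ) * L := Real.logb_rpow (by norm_num) (by norm_num)
  nlinarith
end

section
/- For any real X ≥ 0, the unique nonnegative solution of X·exp(X) = z (i.e., X = W(z), the principal branch of the Lambert W function) satisfies 0.6321·ln(1 + z) ≤ W(z) ≤ ln(1 + z) for all z ≥ 0. -/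
theorem lambertW_bounds (z X : ℝ) (hz : 0 ≤ z) (hX : 0 ≤ X)
    (hW : X * Real.exp X = z) :
    0.6321 * Real.log (1 + z) ≤ X ∧ X ≤ Real.log (1 + z) := by
  have hzpos : (0:ℝ) < 1 + z := by linarith
  have hEpos : 0 < Real.exp X := Real.exp_pos X
  have hE : X + 1 ≤ Real.exp X := Real.add_one_le_exp X
  have hEneg : -X + 1 ≤ Real.exp (-X) := Real.add_one_le_exp (-X)
  have hmul : Real.exp X * Real.exp (-X) = 1 := by
    rw [← Real.exp_add]; simp
  constructor
  · -- lower bound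
    set b : ℝ := 3679 / 6321 with hb
    have hbX : 0 ≤ b * X := by positivity
    have hS : 1 + b*X + (b*X)^2/2 + (b*X)^3/6 ≤ Real.exp (b*X) := by
      have := Real.sum_le_exp_of_nonneg hbX 4
      simp [Finset.sum_range_succ, Nat.factorial] at this
      linarith [this]
    -- polynomial key inequality
    have key : 1 + X + X^2 ≤ (1+X) * (1 + b*X + (b*X)^2/2 + (b*X)^3/6) := by
      rw [hb]
      nlinarith [sq_nonneg (X - 0.6146), mul_nonneg hX (sq_nonneg (X - 0.6146)),
        mul_nonneg (mul_nonneg hX hX) hX, mul_nonneg hX hX]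
    have hSpos : (0:ℝ) < 1 + b*X + (b*X)^2/2 + (b*X)^3/6 := by positivity
    have key2 : 1 + X + X^2 ≤ (1+X) * Real.exp (b*X) := by
      calc 1 + X + X^2 ≤ (1+X) * (1 + b*X + (b*X)^2/2 + (b*X)^3/6) := key
        _ ≤ (1+X) * Real.exp (b*X) := by
          apply mul_le_mul_of_nonneg_left hS (by linarith)
    have hM : Real.exp X * (1 + X + X^2) ≤ Real.exp X * ((1+X) * Real.exp (b*X)) :=
      mul_le_mul_of_nonneg_left key2 (le_of_lt hEpos)
    -- conclude 1 + z ≤ exp (X + b*X)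
    have hzb : 1 + z ≤ Real.exp (X + b*X) := by
      rw [Real.exp_add, ← hW]
      nlinarith [hM, hE, hEpos, mul_nonneg hX hX]
    have hlog : Real.log (1 + z) ≤ X + b*X := by
      rw [Real.log_le_iff_le_exp hzpos]; exact hzb
    have : X + b*X = X / 0.6321 := by rw [hb]; ring
    rw [this] at hlog
    have h6321 : (0:ℝ) < 0.6321 := by norm_num
    calc 0.6321 * Real.log (1 + z) ≤ 0.6321 * (X / 0.6321) := by
          apply mul_le_mul_of_nonneg_left hlog (le_of_lt h6321)
      _ = X := by field_simp
  · -- upper bound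
    rw [Real.le_log_iff_exp_le hzpos, ← hW]
    nlinarith [hEneg, hmul, hEpos]
end

section
/- Fix positive integers B ≤ L−1 and t with t ≥ (L−1)·2^{L−1} (so bracket B has been collecting budget from phase B through the current, unfinished phase L). If t > 16 and L ≤ 1 + log₂(1 + ln(2)·t), then the accumulated budget T_{B,t} = ∑_{i=B}^{L−1} 2^{i−1}(i+1)/i + (t − 2^{L−1}(L−1))/L satisfies T_{B,t} > t/(4·ln t). -/
theorem bracket_budget_lower_bound (B L t : ℕ) (hB : 1 ≤ B) (hBL : B ≤ L - 1)
    (hL : 2 ≤ L) (ht : (L - 1) * 2 ^ (L - 1) ≤ t) (ht16 : 16 < t)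
    (hLt : (L : ℝ) ≤ 1 + Real.logb 2 (1 + Real.log 2 * t)) :
    (∑ i ∈ Finset.Icc B (L - 1), (2 : ℝ) ^ (i - 1) * ((i : ℝ) + 1) / i) +
      ((t : ℝ) - (2 : ℝ) ^ (L - 1) * ((L : ℝ) - 1)) / L > (t : ℝ) / (4 * Real.log t) := by
  have hl2 : (2:ℝ) ≤ (L:ℝ) := by exact_mod_cast hL
  have hl0 : (0:ℝ) < (L:ℝ) := by linarith
  have ht16r : (16:ℝ) < (t:ℝ) := by exact_mod_cast ht16
  have ht0 : (0:ℝ) < (t:ℝ) := by linarith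
  -- log t > 2
  have htlog : 2 < Real.log t := by
    have hexp2 : Real.exp 2 = Real.exp 1 * Real.exp 1 := by
      rw [← Real.exp_add]; norm_num
    have h1 := Real.exp_one_lt_d9
    have he : Real.exp 2 < 16 := by nlinarith [Real.exp_pos 1]
    rw [show (2:ℝ) = Real.log (Real.exp 2) from (Real.log_exp 2).symm]
    exact Real.log_lt_log (Real.exp_pos 2) (by linarith)
  have hlog2gt := Real.log_two_gt_d9
  have hlog2lt := Real.log_two_lt_d9
  have hlog2pos : (0:ℝ) < Real.log 2 := by linarith
  -- L ≤ 1 + log t / log 2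
  have harg : 1 + Real.log 2 * t ≤ t := by nlinarith
  have hargpos : (0:ℝ) < 1 + Real.log 2 * t := by nlinarith
  have hlb : Real.logb 2 (1 + Real.log 2 * t) ≤ Real.log t / Real.log 2 := by
    rw [Real.logb]
    gcongr
  have hLbound : (L:ℝ) ≤ 1 + Real.log t / Real.log 2 := le_trans hLt (by linarith)
  -- 2L < 4 log t
  have hdivle : Real.log t / Real.log 2 ≤ Real.log t / 0.6931471803 := by
    gcongr
  have h2l4log : 2 * (L:ℝ) < 4 * Real.log t := by
    set d : ℝ := Real.log t / Real.log 2 with hddef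
    have hd : d * Real.log 2 = Real.log t := div_mul_cancel₀ _ hlog2pos.ne'
    have hdpos : 0 < d := by positivity
    nlinarith [hd, hdpos, mul_pos hdpos hlog2pos]
  -- sum ≥ 2^(L-2)
  set P : ℝ := 2 ^ (L - 2) with hPdef
  have hPpos : (0:ℝ) < P := by positivity
  have hL1 : 1 ≤ L - 1 := le_trans hB hBL
  have hmem : L - 1 ∈ Finset.Icc B (L - 1) := Finset.mem_Icc.mpr ⟨hBL, le_rfl⟩
  have hsum : P ≤ ∑ i ∈ Finset.Icc B (L - 1), (2 : ℝ) ^ (i - 1) * ((i : ℝ) + 1) / i := by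
    have h1 : (2:ℝ)^(L-1-1) * (((L-1:ℕ):ℝ)+1)/((L-1:ℕ):ℝ) ≤
        ∑ i ∈ Finset.Icc B (L - 1), (2 : ℝ) ^ (i - 1) * ((i : ℝ) + 1) / i :=
      Finset.single_le_sum (f := fun i : ℕ => (2 : ℝ) ^ (i - 1) * ((i : ℝ) + 1) / i)
        (fun i _ => div_nonneg (by positivity) (Nat.cast_nonneg i)) hmem
    have hm1 : (1:ℝ) ≤ ((L-1:ℕ):ℝ) := by exact_mod_cast hL1
    rw [show L - 1 - 1 = L - 2 from by omega] at h1
    calc P = P * 1 := (mul_one P).symm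
      _ ≤ P * ((((L-1:ℕ):ℝ)+1)/((L-1:ℕ):ℝ)) := by
          apply mul_le_mul_of_nonneg_left _ hPpos.le
          rw [le_div_iff₀ (by linarith)]; linarith
      _ = (2:ℝ)^(L-2) * (((L-1:ℕ):ℝ)+1)/((L-1:ℕ):ℝ) := by rw [hPdef, mul_div_assoc]
      _ ≤ _ := h1
  -- cast of ht
  have hpow : (2:ℝ)^(L-1) = 2 * P := by
    rw [hPdef, show L - 1 = L - 2 + 1 from by omega, pow_succ]; ring
  have htR : ((L:ℝ) - 1) * (2 * P) ≤ t := by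
    have hc : ((L-1:ℕ):ℝ) * (2:ℝ)^(L-1) ≤ t := by exact_mod_cast ht
    rw [Nat.cast_sub (by omega : 1 ≤ L), hpow] at hc
    exact_mod_cast hc
  -- middle inequality
  have hmid : (t:ℝ)/(2*(L:ℝ)) ≤ P + ((t:ℝ) - 2*P*((L:ℝ)-1))/(L:ℝ) := by
    rw [div_le_iff₀ (by positivity)]
    have hd : ((t:ℝ) - 2*P*((L:ℝ)-1))/(L:ℝ) * (L:ℝ) = (t:ℝ) - 2*P*((L:ℝ)-1) :=
      div_mul_cancel₀ _ hl0.ne'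
    linarith [hd, htR, hPpos.le]
  -- last strict inequality
  have hfin : (t:ℝ)/(4*Real.log t) < (t:ℝ)/(2*(L:ℝ)) :=
    div_lt_div_of_pos_left ht0 (by positivity) h2l4log
  have hgoal : ((t:ℝ) - (2:ℝ)^(L-1) * ((L:ℝ)-1)) / (L:ℝ)
      = ((t:ℝ) - 2*P*((L:ℝ)-1))/(L:ℝ) := by rw [hpow]
  rw [gt_iff_lt, hgoal]
  calc (t:ℝ)/(4*Real.log t) < (t:ℝ)/(2*(L:ℝ)) := hfin
    _ ≤ P + ((t:ℝ) - 2*P*((L:ℝ)-1))/(L:ℝ) := hmid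
    _ ≤ _ := by linarith
end

section
/- Consider nonnegative integers n, m′, s, k with k ≤ min(m′, s) ≤ n, a set of n arms partitioned into a 'good' set G of size m′ and its complement, and empirical mean estimates μ̂_i for each arm. Suppose (i) at least k+1 arms i in the top-m′ set satisfy μ̂_i > μ_i − ε/2, and (ii) at least |Bad| − s + k + 1 arms i in the bad set Bad (arms with μ_i < μ_{m′} − ε) satisfy μ̂_i < μ_i + ε/2, where every arm in the top-m′ set has true mean at least μ_{m′}. Then the set of s arms with the largest empirical means contains strictly more than k arms whose true mean is at least μ_{m′} − ε. -/
/-- Deterministic combinatorial core (Step 1 of Proposition 1).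
`Top` is the set of the `m'` arms with the largest true means, `μm'` is the
`m'`-th largest true mean, `Bad` is the set of arms with true mean below
`μm' - ε`, and `S` is the set of `s` arms with the largest empirical means. -/
theorem uniform_sampling_good_arms_in_output
    (n m' s k : ℕ) (hk : k ≤ min m' s) (hm'n : m' ≤ n) (hsn : s ≤ n)
    (μ μhat : Fin n → ℝ) (ε : ℝ) (hε : 0 < ε) (μm' : ℝ)
    (Top : Finset (Fin n)) (hTopCard : Top.card = m')
    (hTopMean : ∀ i ∈ Top, μm' ≤ μ i)
    (hTopMax : ∀ i ∈ Top, ∀ j ∉ Top, μ j ≤ μ i)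
    (S : Finset (Fin n)) (hSCard : S.card = s)
    (hSMax : ∀ i ∈ S, ∀ j ∉ S, μhat j ≤ μhat i)
    (h1 : k + 1 ≤ (Top.filter (fun i => μhat i > μ i - ε / 2)).card)
    (h2 : ((((Finset.univ.filter (fun i => μ i < μm' - ε)).filter
              (fun i => μhat i < μ i + ε / 2)).card : ℤ) ≥
            ((Finset.univ.filter (fun i => μ i < μm' - ε)).card : ℤ) - s + k + 1)) :
    k < (S.filter (fun i => μm' - ε ≤ μ i)).card := by
  by_contra hcon
  push_neg at hcon
  set Bad := Finset.univ.filter (fun i => μ i < μm' - ε) with hBadDef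
  set B := Bad.filter (fun i => μhat i < μ i + ε / 2) with hBDef
  set A := Top.filter (fun i => μhat i > μ i - ε / 2) with hADef
  -- A ∩ S is made of "good" arms in S
  have hAS : (A ∩ S) ⊆ S.filter (fun i => μm' - ε ≤ μ i) := by
    intro i hi
    rw [Finset.mem_inter] at hi
    rw [hADef, Finset.mem_filter] at hi
    rw [Finset.mem_filter]
    refine ⟨hi.2, le_trans (by linarith) (hTopMean i hi.1.1)⟩
  have hASk : (A ∩ S).card ≤ k := le_trans (Finset.card_le_card hAS) hcon
  have hAdiff : (A \ S).Nonempty := by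
    rw [← Finset.card_pos]
    have := Finset.card_inter_add_card_sdiff A S
    omega
  obtain ⟨i, hi⟩ := hAdiff
  rw [Finset.mem_sdiff] at hi
  obtain ⟨hiA, hiS⟩ := hi
  rw [hADef, Finset.mem_filter] at hiA
  -- S contains at least s - k bad arms
  have hpart : (S.filter (fun i => μ i < μm' - ε)).card
      + (S.filter (fun i => ¬ μ i < μm' - ε)).card = S.card :=
    Finset.card_filter_add_card_filter_not (fun i => μ i < μm' - ε)
  have hGoodeq : S.filter (fun i => ¬ μ i < μm' - ε)
      = S.filter (fun i => μm' - ε ≤ μ i) := by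
    apply Finset.filter_congr
    intro i _
    simp [not_lt]
  rw [hGoodeq] at hpart
  set SB := S.filter (fun i => μ i < μm' - ε) with hSBDef
  have hsub : SB \ B ⊆ Bad \ B := by
    intro x hx
    rw [Finset.mem_sdiff] at hx ⊢
    refine ⟨?_, hx.2⟩
    rw [hSBDef, Finset.mem_filter] at hx
    rw [hBadDef, Finset.mem_filter]
    exact ⟨Finset.mem_univ x, hx.1.2⟩
  have hBsub : B ⊆ Bad := Finset.filter_subset _ _
  have hBadsplit : (Bad \ B).card = Bad.card - B.card := Finset.card_sdiff_of_subset hBsub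
  have hBle : B.card ≤ Bad.card := Finset.card_le_card hBsub
  have hSBsplit := Finset.card_inter_add_card_sdiff SB B
  have hsdle : (SB \ B).card ≤ (Bad \ B).card := Finset.card_le_card hsub
  have hSBinter : (SB ∩ B).Nonempty := by
    rw [← Finset.card_pos]
    omega
  obtain ⟨j, hj⟩ := hSBinter
  rw [Finset.mem_inter] at hj
  obtain ⟨hjSB, hjB⟩ := hj
  rw [hSBDef, Finset.mem_filter] at hjSB
  rw [hBDef, Finset.mem_filter] at hjB
  have hle := hSMax j hjSB.1 i hiS
  have hμi := hTopMean i hiA.1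
  linarith [hiA.2, hjB.2, hjSB.2]
end
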